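/- The number of duplicative forests reachable from the d-ladder under the duplication order equals a(d), where a(0) = 1 and a(n) = a(n-1) + a(n-1)^2. -/

import Mathlib

mutual
  /-- A duplicative tree: a node colored white (`false`) or black (`true`) with a forest of children. -/
  inductive DTree : Type
    | node : Bool → DForest → DTree
  /-- A duplicative forest: a finite sequence of duplicative trees. -/
  inductive DForest : Type
    | nil : DForest
    | cons : DTree → DForest → DForest
end

def DForest.append : DForest → DForest → DForest
  | .nil, g => g
  | .cons t f, g => .cons t (f.append g)

mutual
  /-- One duplication step inside a tree. -/
  inductive TStep : DTree → DTree → Prop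
    | dup (c : DForest) : TStep (.node false c) (.node true (c.append c))
    | congr (b : Bool) {c c' : DForest} : FStep c c' → TStep (.node b c) (.node b c')
  /-- One duplication step inside a forest. -/
  inductive FStep : DForest → DForest → Prop
    | head {t t' : DTree} (f : DForest) : TStep t t' → FStep (.cons t f) (.cons t' f)
    | tail (t : DTree) {f f' : DForest} : FStep f f' → FStep (.cons t f) (.cons t f')
end

/-- Duplication order on forests. -/
def FLe : DForest → DForest → Prop := Relation.ReflTransGen FStep

mutual
  /-- Number of black nodes of a tree. -/
  def DTree.black : DTree → ℕ
    | .node b c => (cond b 1 0) + DForest.black c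
  /-- Number of black nodes of a forest. -/
  def DForest.black : DForest → ℕ
    | .nil => 0
    | .cons t f => DTree.black t + DForest.black f
end

/-- The d-ladder. -/
def ladder : ℕ → DForest
  | 0 => .nil
  | d + 1 => .cons (.node false (ladder d)) .nil

/-- a(0) = 1, a(n) = a(n-1) + a(n-1)². -/
def seqA : ℕ → ℕ
  | 0 => 1
  | n + 1 => seqA n + (seqA n) ^ 2


def flen : DForest → ℕ
  | .nil => 0
  | .cons _ f => flen f + 1

lemma flen_step : ∀ {f f' : DForest}, FStep f f' → flen f = flen f'
  | .cons _ f, _, .head _ _ => rfl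
  | .cons t f, _, .tail _ s => congrArg (· + 1) (flen_step s)

lemma flen_le {f f' : DForest} (h : FLe f f') : flen f = flen f' := by
  induction h with
  | refl => rfl
  | tail _ s ih => exact ih.trans (flen_step s)

lemma fle_nil {g : DForest} (h : FLe .nil g) : g = .nil := by
  induction h with
  | refl => rfl
  | tail _ s ih => subst ih; cases s

lemma fstep_append_left : ∀ {f f' : DForest} (g : DForest), FStep f f' →
    FStep (f.append g) (f'.append g)
  | .cons _ f, _, g, .head _ s => .head _ s
  | .cons t f, _, g, .tail _ s => .tail t (fstep_append_left g s)

lemma fstep_append_right : ∀ (f : DForest) {g g' : DForest}, FStep g g' →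
    FStep (f.append g) (f.append g')
  | .nil, _, _, s => s
  | .cons t f, _, _, s => .tail t (fstep_append_right f s)

lemma fle_append_left {f f' : DForest} (g : DForest) (h : FLe f f') :
    FLe (f.append g) (f'.append g) :=
  Relation.ReflTransGen.lift (DForest.append · g) (fun _ _ s => fstep_append_left g s) _ _ h

lemma fle_append_right (f : DForest) {g g' : DForest} (h : FLe g g') :
    FLe (f.append g) (f.append g') :=
  Relation.ReflTransGen.lift (f.append ·) (fun _ _ s => fstep_append_right f s) _ _ h

lemma fle_node {b : Bool} {c c' : DForest} (h : FLe c c') :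
    FLe (.cons (.node b c) .nil) (.cons (.node b c') .nil) := by
  induction h with
  | refl => exact Relation.ReflTransGen.refl
  | tail _ s ih => exact ih.tail (.head _ (.congr b s))

lemma fstep_append_split : ∀ (f : DForest) {g h : DForest}, FStep (f.append g) h →
    (∃ f', FStep f f' ∧ h = f'.append g) ∨ (∃ g', FStep g g' ∧ h = f.append g')
  | .nil, g, h, s => Or.inr ⟨h, s, rfl⟩
  | .cons t f, g, h, s => by
    cases s with
    | head _ ts => exact Or.inl ⟨.cons _ f, .head f ts, rfl⟩
    | tail _ s' =>
      rcases fstep_append_split f s' with ⟨f', sf, rfl⟩ | ⟨g', sg, rfl⟩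
      · exact Or.inl ⟨.cons t f', .tail t sf, rfl⟩
      · exact Or.inr ⟨g', sg, rfl⟩

lemma append_inj : ∀ {f1 f2 g1 g2 : DForest}, flen f1 = flen f2 →
    f1.append g1 = f2.append g2 → f1 = f2 ∧ g1 = g2
  | .nil, .nil, _, _, _, h => ⟨rfl, h⟩
  | .nil, .cons _ _, _, _, hl, _ => by simp [flen] at hl
  | .cons _ _, .nil, _, _, hl, _ => by simp [flen] at hl
  | .cons t1 f1, .cons t2 f2, g1, g2, hl, h => by
    simp only [DForest.append, DForest.cons.injEq] at h
    simp only [flen, Nat.add_right_cancel_iff] at hl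
    obtain ⟨rfl, h2⟩ := h
    obtain ⟨rfl, rfl⟩ := append_inj hl h2
    exact ⟨rfl, rfl⟩

lemma reach_succ (d : ℕ) (g : DForest) : FLe (ladder (d + 1)) g ↔
    (∃ h, FLe (ladder d) h ∧ g = .cons (.node false h) .nil) ∨
    (∃ h1 h2, FLe (ladder d) h1 ∧ FLe (ladder d) h2 ∧
      g = .cons (.node true (h1.append h2)) .nil) := by
  constructor
  · intro h
    induction h with
    | refl => exact Or.inl ⟨ladder d, Relation.ReflTransGen.refl, rfl⟩
    | tail _ s ih =>
      rcases ih with ⟨h, hle, rfl⟩ | ⟨h1, h2, hl1, hl2, rfl⟩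
      · cases s with
        | head _ ts =>
          cases ts with
          | dup c => exact Or.inr ⟨h, h, hle, hle, rfl⟩
          | congr b s' => exact Or.inl ⟨_, hle.tail s', rfl⟩
        | tail _ s' => cases s'
      · cases s with
        | head _ ts =>
          cases ts with
          | congr b s' =>
            rcases fstep_append_split h1 s' with ⟨f', sf, rfl⟩ | ⟨g', sg, rfl⟩
            · exact Or.inr ⟨f', h2, hl1.tail sf, hl2, rfl⟩
            · exact Or.inr ⟨h1, g', hl1, hl2.tail sg, rfl⟩
        | tail _ s' => cases s'
  · rintro (⟨h, hle, rfl⟩ | ⟨h1, h2, hl1, hl2, rfl⟩)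
    · exact fle_node hle
    · refine Relation.ReflTransGen.head (.head _ (.dup (ladder d))) ?_
      exact fle_node (((fle_append_left (ladder d) hl1).trans
        (fle_append_right h1 hl2)))

lemma key (d : ℕ) : Nonempty ({g : DForest // FLe (ladder d) g} ≃ Fin (seqA d)) := by
  induction d with
  | zero =>
    have e1 : {g : DForest // FLe (ladder 0) g} ≃ Fin 1 := by
      refine ⟨fun _ => 0, fun _ => ⟨.nil, Relation.ReflTransGen.refl⟩, ?_, ?_⟩
      · rintro ⟨g, hg⟩
        simpa [Subtype.ext_iff] using (fle_nil hg).symm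
      · intro x; exact Subsingleton.elim _ _
    exact ⟨e1.trans (finCongr (by simp [seqA]))⟩
  | succ d ih =>
    obtain ⟨e⟩ := ih
    set S := {h : DForest // FLe (ladder d) h} with hS
    let F : S ⊕ S × S → {g : DForest // FLe (ladder (d + 1)) g} := fun x =>
      match x with
      | .inl h => ⟨.cons (.node false h.1) .nil,
          (reach_succ d _).2 (Or.inl ⟨h.1, h.2, rfl⟩)⟩
      | .inr (h1, h2) => ⟨.cons (.node true (h1.1.append h2.1)) .nil,
          (reach_succ d _).2 (Or.inr ⟨h1.1, h2.1, h1.2, h2.2, rfl⟩)⟩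
    have hF : Function.Bijective F := by
      constructor
      · rintro (⟨h, hh⟩ | ⟨⟨h1, hh1⟩, ⟨h2, hh2⟩⟩) (⟨h', hh'⟩ | ⟨⟨h1', hh1'⟩, ⟨h2', hh2'⟩⟩) hEq
        · simp only [F, Subtype.mk.injEq, DForest.cons.injEq, DTree.node.injEq] at hEq
          obtain ⟨⟨_, rfl⟩, _⟩ := hEq; rfl
        · simp [F] at hEq
        · simp [F] at hEq
        · simp only [F, Subtype.mk.injEq, DForest.cons.injEq, DTree.node.injEq] at hEq
          obtain ⟨⟨_, happ⟩, _⟩ := hEq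
          have hl : flen h1 = flen h1' := (flen_le hh1).symm.trans (flen_le hh1')
          obtain ⟨rfl, rfl⟩ := append_inj hl happ
          rfl
      · rintro ⟨g, hg⟩
        rcases (reach_succ d g).1 hg with ⟨h, hle, rfl⟩ | ⟨h1, h2, hl1, hl2, rfl⟩
        · exact ⟨.inl ⟨h, hle⟩, rfl⟩
        · exact ⟨.inr (⟨h1, hl1⟩, ⟨h2, hl2⟩), rfl⟩
    have hn : seqA d + seqA d * seqA d = seqA (d + 1) := by
      simp [seqA, pow_two]
    exact ⟨(Equiv.ofBijective F hF).symm.trans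
      (((e.sumCongr (e.prodCongr e)).trans
        ((Equiv.refl _).sumCongr finProdFinEquiv)).trans
        (finSumFinEquiv.trans (finCongr hn)))⟩

/-- The number of duplicative forests reachable from the d-ladder equals a(d). -/
theorem ladder_card (d : ℕ) :
    Nat.card {g : DForest // FLe (ladder d) g} = seqA d := by
  obtain ⟨e⟩ := key d
  simpa using Nat.card_congr e
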